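/- arXiv:1612.07242 — 6 statements merged into one kernel-verified Lean document; each statement's English description precedes it below -/
import Mathlib

section
/- Let m > n ≥ 2 be integers that are both odd. Then the infimum of the set of values (n·sin t − sin(n t))/(m·sin t − sin(m t)) as t ranges over the open interval (0, π) equals (n³ − n)/(m³ − m). -/
open Real Filter Set

private lemma nonneg_of_deriv (f f' : ℝ → ℝ) (hder : ∀ x, HasDerivAt f (f' x) x)
    (h0 : f 0 = 0) (hpos : ∀ x, 0 ≤ x → 0 ≤ f' x) : ∀ x, 0 ≤ x → 0 ≤ f x := by
  intro x hx
  have hmono : MonotoneOn f (Set.Ici (0:ℝ)) := by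
    apply monotoneOn_of_deriv_nonneg (convex_Ici 0)
    · exact fun y _ => (hder y).continuousAt.continuousWithinAt
    · exact fun y _ => ((hder y).differentiableAt).differentiableWithinAt
    · intro y hy
      rw [(hder y).deriv]
      rw [interior_Ici] at hy
      exact hpos y (le_of_lt hy)
  calc (0:ℝ) = f 0 := h0.symm
    _ ≤ f x := hmono (Set.mem_Ici.2 le_rfl) (Set.mem_Ici.2 hx) hx

private lemma sin_ge_cubic : ∀ x : ℝ, 0 ≤ x → x - x^3/6 ≤ Real.sin x := by
  have h := nonneg_of_deriv (fun x => Real.sin x - x + x^3/6)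
      (fun x => Real.cos x - 1 + x^2/2)
      (fun x => by
        have h1 := (Real.hasDerivAt_sin x).sub (hasDerivAt_id x)
        have h2 := ((hasDerivAt_pow 3 x).div_const 6)
        have := h1.add h2
        refine this.congr_deriv ?_
        push_cast; ring)
      (by norm_num)
      (fun x _ => by nlinarith [Real.one_sub_sq_div_two_le_cos (x := x)])
  intro x hx; have := h x hx; linarith

private lemma cos_le_quartic : ∀ x : ℝ, 0 ≤ x → Real.cos x ≤ 1 - x^2/2 + x^4/24 := by
  have h := nonneg_of_deriv (fun x => 1 - x^2/2 + x^4/24 - Real.cos x)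
      (fun x => -x + x^3/6 + Real.sin x)
      (fun x => by
        have h1 := ((hasDerivAt_pow 2 x).div_const 2)
        have h2 := ((hasDerivAt_pow 4 x).div_const 24)
        have := ((hasDerivAt_const x (1:ℝ)).sub h1).add h2 |>.sub (Real.hasDerivAt_cos x)
        refine this.congr_deriv ?_
        push_cast; ring)
      (by norm_num)
      (fun x hx => by nlinarith [sin_ge_cubic x hx])
  intro x hx; have := h x hx; linarith

private lemma sin_le_quintic : ∀ x : ℝ, 0 ≤ x → Real.sin x ≤ x - x^3/6 + x^5/120 := by
  have h := nonneg_of_deriv (fun x => x - x^3/6 + x^5/120 - Real.sin x)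
      (fun x => 1 - x^2/2 + x^4/24 - Real.cos x)
      (fun x => by
        have h1 := ((hasDerivAt_pow 3 x).div_const 6)
        have h2 := ((hasDerivAt_pow 5 x).div_const 120)
        have := ((hasDerivAt_id x).sub h1).add h2 |>.sub (Real.hasDerivAt_sin x)
        refine this.congr_deriv ?_
        push_cast; ring)
      (by norm_num)
      (fun x hx => by linarith [cos_le_quartic x hx])
  intro x hx; have := h x hx; linarith

private lemma cos_ge_sextic : ∀ x : ℝ, 0 ≤ x → 1 - x^2/2 + x^4/24 - x^6/720 ≤ Real.cos x := by
  have h := nonneg_of_deriv (fun x => Real.cos x - (1 - x^2/2 + x^4/24 - x^6/720))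
      (fun x => -Real.sin x - (-x + x^3/6 - x^5/120))
      (fun x => by
        have h1 := ((hasDerivAt_pow 2 x).div_const 2)
        have h2 := ((hasDerivAt_pow 4 x).div_const 24)
        have h3 := ((hasDerivAt_pow 6 x).div_const 720)
        have := (Real.hasDerivAt_cos x).sub ((((hasDerivAt_const x (1:ℝ)).sub h1).add h2).sub h3)
        refine this.congr_deriv ?_
        push_cast; ring)
      (by norm_num)
      (fun x hx => by linarith [sin_le_quintic x hx])
  intro x hx; have := h x hx; linarith

-- squared bounds, valid for all x ≥ 0
private lemma sin_sq_ge_poly : ∀ x : ℝ, 0 ≤ x → x^2 - x^4/3 ≤ Real.sin x ^ 2 := by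
  intro x hx
  have h := cos_le_quartic (2*x) (by linarith)
  have hs : Real.sin x ^ 2 = 1/2 - Real.cos (2*x)/2 := Real.sin_sq_eq_half_sub x
  rw [hs]; nlinarith

private lemma sin_sq_le_poly : ∀ x : ℝ, 0 ≤ x → Real.sin x ^ 2 ≤ x^2 - x^4/3 + 2*x^6/45 := by
  intro x hx
  have h := cos_ge_sextic (2*x) (by linarith)
  have hs : Real.sin x ^ 2 = 1/2 - Real.cos (2*x)/2 := Real.sin_sq_eq_half_sub x
  rw [hs]; nlinarith

noncomputable def Tsum (r : ℕ) (t : ℝ) : ℝ := ∑ j ∈ Finset.range r, Real.sin (((j:ℝ)+1)*t) ^ 2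
noncomputable def Wsum (r : ℕ) : ℝ := ∑ j ∈ Finset.range r, ((j:ℝ)+1)^2
noncomputable def Vsum (r : ℕ) : ℝ := ∑ j ∈ Finset.range r, ((j:ℝ)+1)^4

lemma Wsum_closed (r : ℕ) : 6 * Wsum r = (r:ℝ) * (r+1) * (2*r+1) := by
  induction r with
  | zero => simp [Wsum]
  | succ n ih =>
    rw [Wsum, Finset.sum_range_succ, mul_add, ← Wsum, ih]
    push_cast; ring

lemma Vsum_closed (r : ℕ) : 30 * Vsum r = (r:ℝ) * (r+1) * (2*r+1) * (3*(r:ℝ)^2+3*r-1) := by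
  induction r with
  | zero => simp [Vsum]
  | succ n ih =>
    rw [Vsum, Finset.sum_range_succ, mul_add, ← Vsum, ih]
    push_cast; ring

lemma Wsum_pos {r : ℕ} (hr : 1 ≤ r) : 0 < Wsum r := by
  apply Finset.sum_pos (fun i _ => by positivity)
  exact Finset.nonempty_range_iff.2 (by omega)

lemma Tsum_succ (r : ℕ) (t : ℝ) :
    Tsum (r+1) t = Tsum r t + Real.sin (((r:ℝ)+1)*t) ^ 2 := by
  rw [Tsum, Finset.sum_range_succ, ← Tsum]

lemma Tsum_ident (r : ℕ) (t : ℝ) :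
    (2*(r:ℝ)+1) * Real.sin t - Real.sin ((2*(r:ℝ)+1)*t) = 4 * Real.sin t * Tsum r t := by
  induction r with
  | zero => simp [Tsum]
  | succ n ih =>
    rw [Tsum_succ]
    have key : Real.sin ((2*((n:ℝ)+1)+1)*t) - Real.sin ((2*(n:ℝ)+1)*t)
        = 2 * Real.cos (2*(((n:ℝ)+1)*t)) * Real.sin t := by
      have h1 : (2*((n:ℝ)+1)+1)*t = 2*(((n:ℝ)+1)*t) + t := by ring
      have h2 : (2*(n:ℝ)+1)*t = 2*(((n:ℝ)+1)*t) - t := by ring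
      rw [h1, h2, Real.sin_add, Real.sin_sub]; ring
    have hc : Real.cos (2*(((n:ℝ)+1)*t)) = 1 - 2 * Real.sin (((n:ℝ)+1)*t)^2 := by
      rw [Real.cos_two_mul', Real.cos_sq']; ring
    push_cast at ih ⊢
    linear_combination ih - key - 2*Real.sin t*hc
-- KEY inequality: Wsum r * sin((r+1)t)^2 ≤ (r+1)^2 * Tsum r t  on (0,π)

private lemma sin_sq_pi_sub (c : ℕ) (x : ℝ) :
    Real.sin ((c:ℝ)*(π-x))^2 = Real.sin ((c:ℝ)*x)^2 := by
  have h : (c:ℝ)*(π-x) = (c:ℝ)*π - (c:ℝ)*x := by ring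
  rw [h, Real.sin_nat_mul_pi_sub, neg_sq, mul_pow, ← pow_mul, mul_comm c 2, pow_mul]
  norm_num

private lemma Tsum_pi_sub (r : ℕ) (t : ℝ) : Tsum r (π - t) = Tsum r t := by
  unfold Tsum
  apply Finset.sum_congr rfl
  intro j _
  have h1 : ((j:ℝ)+1) = (((j+1:ℕ)):ℝ) := by push_cast; ring
  rw [h1, sin_sq_pi_sub]

private lemma keyA (r : ℕ) (hr : 1 ≤ r) (t : ℝ) (ht0 : 0 ≤ t)
    (ht1 : 10*((r:ℝ)+1)*t ≤ 17) :
    Wsum r * Real.sin (((r:ℝ)+1)*t)^2 ≤ ((r:ℝ)+1)^2 * Tsum r t := by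
  set K : ℝ := (r:ℝ)+1 with hK
  have hr1 : (1:ℝ) ≤ (r:ℝ) := by exact_mod_cast hr
  have hr0 : (0:ℝ) ≤ (r:ℝ) := by linarith
  have hKpos : 0 < K := by rw [hK]; positivity
  clear_value K
  have hW0 : 0 ≤ Wsum r := le_of_lt (Wsum_pos hr)
  have h6W := Wsum_closed r
  have h30V := Vsum_closed r
  have hV : 5 * Vsum r = Wsum r * (3*(r:ℝ)^2+3*(r:ℝ)-1) := by
    linear_combination (h30V - (3*(r:ℝ)^2+3*(r:ℝ)-1) * h6W)/6
  -- lower bound on Tsum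
  have hTlow : t^2 * Wsum r - t^4/3 * Vsum r ≤ Tsum r t := by
    have heq : t^2 * Wsum r - t^4/3 * Vsum r
        = ∑ j ∈ Finset.range r, ((((j:ℝ)+1)*t)^2 - (((j:ℝ)+1)*t)^4/3) := by
      rw [Wsum, Vsum, Finset.mul_sum, Finset.mul_sum, ← Finset.sum_sub_distrib]
      apply Finset.sum_congr rfl; intro j _; ring
    rw [heq, Tsum]
    apply Finset.sum_le_sum
    intro j _
    exact sin_sq_ge_poly (((j:ℝ)+1)*t) (by positivity)
  -- upper bound on sin(Kt)^2
  have hShigh : Real.sin (K*t)^2 ≤ (K*t)^2 - (K*t)^4/3 + 2*(K*t)^6/45 :=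
    sin_sq_le_poly (K*t) (mul_nonneg (le_of_lt hKpos) ht0)
  -- the middle polynomial inequality
  have hKt0 : 0 ≤ 10*K*t := by nlinarith [mul_nonneg (le_of_lt hKpos) ht0]
  have h100 : (K*t)^2 ≤ 289/100 := by
    have hsq := mul_self_le_mul_self hKt0 ht1
    nlinarith [hsq]
  have hmid : Wsum r * ((K*t)^2 - (K*t)^4/3 + 2*(K*t)^6/45)
      ≤ K^2 * (t^2 * Wsum r - t^4/3 * Vsum r) := by
    have e1 : K^2 * (t^2 * Wsum r - t^4/3 * Vsum r)
        - Wsum r * ((K*t)^2 - (K*t)^4/3 + 2*(K*t)^6/45)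
        = K^2*t^4*((K^2*Wsum r - Vsum r)/3 - (2/45)*(Wsum r*K^2)*(K*t)^2) := by ring
    have h2 : (2/45)*(Wsum r*K^2)*(K*t)^2 ≤ (2/45)*(Wsum r*K^2)*(289/100) := by
      have := mul_le_mul_of_nonneg_left h100 (mul_nonneg hW0 (sq_nonneg K))
      nlinarith [this]
    have h3 : (2/45)*(Wsum r*K^2)*(289/100) ≤ (K^2*Wsum r - Vsum r)/3 := by
      rw [hK]
      nlinarith [hV, hW0, hr0, mul_nonneg hW0 hr0, mul_nonneg (mul_nonneg hW0 hr0) hr0]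
    have hX : 0 ≤ (K^2*Wsum r - Vsum r)/3 - (2/45)*(Wsum r*K^2)*(K*t)^2 := by linarith
    have hprod := mul_nonneg (mul_nonneg (sq_nonneg K) (pow_nonneg ht0 4)) hX
    linarith [e1, hprod]
  calc Wsum r * Real.sin (K*t)^2
      ≤ Wsum r * ((K*t)^2 - (K*t)^4/3 + 2*(K*t)^6/45) :=
        mul_le_mul_of_nonneg_left hShigh hW0
    _ ≤ K^2 * (t^2 * Wsum r - t^4/3 * Vsum r) := hmid
    _ ≤ K^2 * Tsum r t := mul_le_mul_of_nonneg_left hTlow (sq_nonneg K)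

private lemma keyB (r : ℕ) (hr : 1 ≤ r) (t : ℝ) (ht0 : 0 < t) (htpi : t < π)
    (hsin : 3*((r:ℝ)+1) ≤ Real.sin t * ((2*((r:ℝ)+1)-1)*(((r:ℝ)+1)+2))) :
    Wsum r * Real.sin (((r:ℝ)+1)*t)^2 ≤ ((r:ℝ)+1)^2 * Tsum r t := by
  have hr1 : (1:ℝ) ≤ (r:ℝ) := by exact_mod_cast hr
  have hs : 0 < Real.sin t := Real.sin_pos_of_pos_of_lt_pi ht0 htpi
  have h6W := Wsum_closed r
  have hW0 : 0 ≤ Wsum r := le_of_lt (Wsum_pos hr)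
  have hid := Tsum_ident r t
  have hsin1 : Real.sin ((2*(r:ℝ)+1)*t) ≤ 1 := Real.sin_le_one _
  have hsq1 : Real.sin (((r:ℝ)+1)*t)^2 ≤ 1 := Real.sin_sq_le_one _
  have hzero : ((r:ℝ)+1)^2*(2*(r:ℝ)+1) - ((r:ℝ)+1)*(2*((r:ℝ)+1)-1)*(((r:ℝ)+1)+2)/3
      - 4*Wsum r = 0 := by
    linear_combination (-(2:ℝ)/3)*h6W
  have hz2 : 4*Real.sin t*Wsum r = Real.sin t*(((r:ℝ)+1)^2*(2*(r:ℝ)+1))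
      - Real.sin t*(((r:ℝ)+1)*(2*((r:ℝ)+1)-1)*(((r:ℝ)+1)+2)/3) := by
    linear_combination (-Real.sin t) * hzero
  have hm : 3*((r:ℝ)+1)*(((r:ℝ)+1)/3) ≤
      Real.sin t * ((2*((r:ℝ)+1)-1)*(((r:ℝ)+1)+2)) * (((r:ℝ)+1)/3) :=
    mul_le_mul_of_nonneg_right hsin (by positivity)
  have hWT : 4*Real.sin t*Wsum r ≤ ((r:ℝ)+1)^2 * (4*Real.sin t*Tsum r t) := by
    rw [← hid]
    linarith [hz2, hm, mul_le_mul_of_nonneg_left hsin1 (sq_nonneg ((r:ℝ)+1))]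
  have h4s : (0:ℝ) < 4*Real.sin t := by linarith
  have h' : (4*Real.sin t)*Wsum r ≤ (4*Real.sin t)*(((r:ℝ)+1)^2*Tsum r t) := by
    linarith [hWT]
  have hWT2 : Wsum r ≤ ((r:ℝ)+1)^2*Tsum r t := le_of_mul_le_mul_left h' h4s
  calc Wsum r * Real.sin (((r:ℝ)+1)*t)^2 ≤ Wsum r * 1 :=
        mul_le_mul_of_nonneg_left hsq1 hW0
    _ = Wsum r := mul_one _
    _ ≤ ((r:ℝ)+1)^2 * Tsum r t := hWT2

private lemma key (r : ℕ) (hr : 1 ≤ r) (t : ℝ) (ht0 : 0 < t) (htpi : t < π) :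
    Wsum r * Real.sin (((r:ℝ)+1)*t)^2 ≤ ((r:ℝ)+1)^2 * Tsum r t := by
  have hr1 : (1:ℝ) ≤ (r:ℝ) := by exact_mod_cast hr
  have hKpos : (0:ℝ) < (r:ℝ)+1 := by positivity
  have hK2 : (2:ℝ) ≤ (r:ℝ)+1 := by linarith
  by_cases hA : 10*((r:ℝ)+1)*t ≤ 17
  · exact keyA r hr t (le_of_lt ht0) hA
  by_cases hA' : 10*((r:ℝ)+1)*(π - t) ≤ 17
  · have h := keyA r hr (π - t) (by linarith) hA'
    rw [Tsum_pi_sub] at h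
    have h2 : Real.sin (((r:ℝ)+1)*(π-t))^2 = Real.sin (((r:ℝ)+1)*t)^2 := by
      have h1 : ((r:ℝ)+1) = (((r+1:ℕ)):ℝ) := by push_cast; ring
      rw [h1, sin_sq_pi_sub]
    rw [h2] at h
    exact h
  -- middle regime
  push_neg at hA hA'
  set K : ℝ := (r:ℝ)+1 with hK
  clear_value K
  have h10K : (0:ℝ) < 10*K := by linarith
  have hτpos : 0 < 17/(10*K) := div_pos (by norm_num) h10K
  have hτt : 17/(10*K) < t := by
    rw [div_lt_iff₀ h10K]
    linarith
  have hτt2 : t < π - 17/(10*K) := by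
    have : 17/(10*K) < π - t := by rw [div_lt_iff₀ h10K]; linarith
    linarith
  have hτhalf : 17/(10*K) ≤ 17/20 := by
    apply div_le_div_of_nonneg_left (by norm_num) (by norm_num)
    linarith
  have hπ4 : (3:ℝ) < π := Real.pi_gt_three
  have hsinτ : Real.sin (17/(10*K)) ≤ Real.sin t := by
    rcases le_or_gt t (π/2) with hhalf | hhalf
    · apply le_of_lt
      apply Real.sin_lt_sin_of_lt_of_le_pi_div_two (by linarith) hhalf hτt
    · rw [← Real.sin_pi_sub t]
      apply le_of_lt
      apply Real.sin_lt_sin_of_lt_of_le_pi_div_two (by linarith) (by linarith) (by linarith)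
  have hcube : 17/(10*K) - (17/(10*K))^3/6 ≤ Real.sin (17/(10*K)) :=
    sin_ge_cubic _ (le_of_lt hτpos)
  have hKne : K ≠ 0 := ne_of_gt hKpos
  have hfin : 3*K ≤ (17/(10*K) - (17/(10*K))^3/6) * ((2*K-1)*(K+2)) := by
    rw [← sub_nonneg]
    have e : (17/(10*K) - (17/(10*K))^3/6) * ((2*K-1)*(K+2)) - 3*K
        = ((10200*K^2 - 4913)*((2*K-1)*(K+2)) - 18000*K^4)/(6000*K^3) := by
      field_simp
      ring
    rw [e]
    apply div_nonneg _ (le_of_lt (by nlinarith [pow_pos hKpos 3] : (0:ℝ) < 6000*K^3))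
    have h0 : (0:ℝ) ≤ K - 2 := by linarith
    nlinarith [h0, mul_nonneg h0 h0, mul_nonneg (mul_nonneg h0 h0) h0,
      mul_nonneg (mul_nonneg (mul_nonneg h0 h0) h0) h0]
  rw [hK]
  apply keyB r hr t ht0 htpi
  rw [← hK]
  calc 3*K ≤ (17/(10*K) - (17/(10*K))^3/6) * ((2*K-1)*(K+2)) := hfin
    _ ≤ Real.sin t * ((2*K-1)*(K+2)) := by
        apply mul_le_mul_of_nonneg_right (le_trans hcube hsinτ)
        nlinarith [hK2]

-- monotonicity of the ratio Tsum r / Wsum r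
private lemma Tsum_pos (r : ℕ) (hr : 1 ≤ r) (t : ℝ) (ht0 : 0 < t) (htpi : t < π) :
    0 < Tsum r t := by
  have hs : 0 < Real.sin t := Real.sin_pos_of_pos_of_lt_pi ht0 htpi
  apply Finset.sum_pos'
  · intro i _; positivity
  · refine ⟨0, Finset.mem_range.2 hr, ?_⟩
    have h : (((0:ℕ):ℝ)+1)*t = t := by norm_num
    rw [h]
    exact pow_pos hs 2

private lemma ratio_mono (r s : ℕ) (hr : 1 ≤ r) (hrs : r ≤ s) (t : ℝ)
    (ht0 : 0 < t) (htpi : t < π) :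
    Tsum s t / Wsum s ≤ Tsum r t / Wsum r := by
  induction s, hrs using Nat.le_induction with
  | base => exact le_refl _
  | succ n hn ih =>
    refine le_trans ?_ ih
    have hWn : 0 < Wsum n := Wsum_pos (le_trans hr hn)
    have hWn1 : 0 < Wsum (n+1) := Wsum_pos (by omega)
    rw [div_le_div_iff₀ hWn1 hWn]
    have hk := key n (le_trans hr hn) t ht0 htpi
    have hTsucc : Tsum (n+1) t = Tsum n t + Real.sin (((n:ℝ)+1)*t)^2 := Tsum_succ n t
    have hWsucc : Wsum (n+1) = Wsum n + ((n:ℝ)+1)^2 := by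
      rw [Wsum, Finset.sum_range_succ, ← Wsum]
    rw [hTsucc, hWsucc]
    nlinarith [hk]

private lemma main_lb (r s : ℕ) (hr : 1 ≤ r) (hrs : r ≤ s) (t : ℝ)
    (ht0 : 0 < t) (htpi : t < π) :
    Wsum r / Wsum s ≤ Tsum r t / Tsum s t := by
  have hWr : 0 < Wsum r := Wsum_pos hr
  have hWs : 0 < Wsum s := Wsum_pos (le_trans hr hrs)
  have hTs : 0 < Tsum s t := Tsum_pos s (le_trans hr hrs) t ht0 htpi
  have hmono := ratio_mono r s hr hrs t ht0 htpi
  rw [div_le_div_iff₀ hWs hTs]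
  have := (div_le_div_iff₀ hWs hWr).1 hmono
  nlinarith [this]

-- limits
private lemma tendsto_sin_mul_div (c : ℝ) (hc : 0 < c) :
    Filter.Tendsto (fun t : ℝ => Real.sin (c*t)/t) (nhdsWithin 0 (Set.Ioi 0)) (nhds c) := by
  have hslope : Filter.Tendsto (fun y : ℝ => Real.sin y / y) (nhdsWithin 0 {(0:ℝ)}ᶜ) (nhds 1) := by
    have h := Real.hasDerivAt_sin 0
    rw [Real.cos_zero, hasDerivAt_iff_tendsto_slope] at h
    have he : slope Real.sin 0 = fun y : ℝ => Real.sin y / y := by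
      funext y
      rw [slope_def_field, Real.sin_zero, sub_zero, sub_zero]
    rwa [he] at h
  have hmap : Filter.Tendsto (fun t : ℝ => c*t) (nhdsWithin 0 (Set.Ioi 0))
      (nhdsWithin 0 {(0:ℝ)}ᶜ) := by
    apply tendsto_nhdsWithin_of_tendsto_nhds_of_eventually_within
    · have hcont : Filter.Tendsto (fun t : ℝ => c*t) (nhds 0) (nhds 0) := by
        have h := ((continuous_const (y := c)).mul continuous_id).tendsto (0:ℝ)
        have h0 : ((fun _ : ℝ => c) * id : ℝ → ℝ) 0 = 0 := by simp
        rw [h0] at h; exact h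
      exact hcont.mono_left nhdsWithin_le_nhds
    · filter_upwards [self_mem_nhdsWithin] with t ht
      have : 0 < c*t := mul_pos hc ht
      exact ne_of_gt this
  have hcomp := hslope.comp hmap
  have hmul := hcomp.const_mul c
  rw [mul_one] at hmul
  apply hmul.congr'
  filter_upwards [self_mem_nhdsWithin] with t ht
  have htne : (t:ℝ) ≠ 0 := ne_of_gt ht
  have hcne : c ≠ 0 := ne_of_gt hc
  simp only [Function.comp_apply]
  field_simp

private lemma tendsto_Tsum_div_sq (r : ℕ) :
    Filter.Tendsto (fun t : ℝ => Tsum r t / t^2) (nhdsWithin 0 (Set.Ioi 0)) (nhds (Wsum r)) := by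
  have h : ∀ j ∈ Finset.range r, Filter.Tendsto
      (fun t : ℝ => (Real.sin (((j:ℝ)+1)*t)/t)^2) (nhdsWithin 0 (Set.Ioi 0))
      (nhds (((j:ℝ)+1)^2)) := by
    intro j _
    exact (tendsto_sin_mul_div ((j:ℝ)+1) (by positivity)).pow 2
  have hsum := tendsto_finset_sum (Finset.range r) h
  rw [show (∑ j ∈ Finset.range r, ((j:ℝ)+1)^2) = Wsum r from rfl] at hsum
  apply hsum.congr'
  filter_upwards [self_mem_nhdsWithin] with t ht
  have htne : (t:ℝ) ≠ 0 := ne_of_gt ht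
  rw [Tsum, Finset.sum_div]
  apply Finset.sum_congr rfl
  intro j _
  rw [div_pow]

private lemma tendsto_ratio (r s : ℕ) (hs1 : 1 ≤ s) :
    Filter.Tendsto (fun t : ℝ => Tsum r t / Tsum s t) (nhdsWithin 0 (Set.Ioi 0))
      (nhds (Wsum r / Wsum s)) := by
  have hr := tendsto_Tsum_div_sq r
  have hs := tendsto_Tsum_div_sq s
  have hdiv := hr.div hs (ne_of_gt (Wsum_pos hs1))
  apply hdiv.congr'
  filter_upwards [self_mem_nhdsWithin] with t ht
  have htne : t^2 ≠ 0 := pow_ne_zero 2 (ne_of_gt ht)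
  simp only [Pi.div_apply]
  rcases eq_or_ne (Tsum s t) 0 with h0 | h0
  · rw [h0]; simp
  · rw [div_div_div_cancel_right₀ htne]

theorem stmt_0 (m n : ℕ) (hn : 2 ≤ n) (hnm : n < m) (hmo : Odd m) (hno : Odd n) :
    sInf ((fun t : ℝ =>
        ((n : ℝ) * Real.sin t - Real.sin ((n : ℝ) * t)) /
          ((m : ℝ) * Real.sin t - Real.sin ((m : ℝ) * t))) '' Set.Ioo 0 π) =
      ((n : ℝ) ^ 3 - n) / ((m : ℝ) ^ 3 - m) := by
  obtain ⟨a, ha⟩ := hno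
  obtain ⟨b, hb⟩ := hmo
  have ha1 : 1 ≤ a := by omega
  have hb1 : 1 ≤ b := by omega
  have hab : a ≤ b := by omega
  have hWa : 0 < Wsum a := Wsum_pos ha1
  have hWb : 0 < Wsum b := Wsum_pos hb1
  have hna : (n:ℝ) = 2*(a:ℝ)+1 := by
    have : (n:ℕ) = 2*a+1 := by omega
    rw [this]; push_cast; ring
  have hmb : (m:ℝ) = 2*(b:ℝ)+1 := by
    have : (m:ℕ) = 2*b+1 := by omega
    rw [this]; push_cast; ring
  have hfeq : ∀ t ∈ Set.Ioo (0:ℝ) π,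
      ((n : ℝ) * Real.sin t - Real.sin ((n : ℝ) * t)) /
          ((m : ℝ) * Real.sin t - Real.sin ((m : ℝ) * t)) = Tsum a t / Tsum b t := by
    intro t ht
    have hs : 0 < Real.sin t := Real.sin_pos_of_pos_of_lt_pi ht.1 ht.2
    have h4 : (4:ℝ)*Real.sin t ≠ 0 := ne_of_gt (by linarith)
    rw [hna, hmb, Tsum_ident a t, Tsum_ident b t, mul_div_mul_left _ _ h4]
  have hL : ((n:ℝ)^3 - n)/((m:ℝ)^3 - m) = Wsum a / Wsum b := by
    have h6a := Wsum_closed a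
    have h6b := Wsum_closed b
    have hnum : (n:ℝ)^3 - n = 24 * Wsum a := by rw [hna]; linear_combination (-4)*h6a
    have hden : (m:ℝ)^3 - m = 24 * Wsum b := by rw [hmb]; linear_combination (-4)*h6b
    rw [hnum, hden, mul_div_mul_left _ _ (by norm_num : (24:ℝ) ≠ 0)]
  rw [hL]
  have hlb : ∀ y ∈ ((fun t : ℝ =>
        ((n : ℝ) * Real.sin t - Real.sin ((n : ℝ) * t)) /
          ((m : ℝ) * Real.sin t - Real.sin ((m : ℝ) * t))) '' Set.Ioo 0 π),
      Wsum a / Wsum b ≤ y := by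
    rintro y ⟨t, ht, rfl⟩
    dsimp only
    rw [hfeq t ht]
    exact main_lb a b ha1 hab t ht.1 ht.2
  have hπ2 : (π/2 : ℝ) ∈ Set.Ioo (0:ℝ) π := ⟨by positivity, by linarith [Real.pi_pos]⟩
  have hne : ((fun t : ℝ =>
        ((n : ℝ) * Real.sin t - Real.sin ((n : ℝ) * t)) /
          ((m : ℝ) * Real.sin t - Real.sin ((m : ℝ) * t))) '' Set.Ioo 0 π).Nonempty :=
    ⟨_, Set.mem_image_of_mem _ hπ2⟩
  have hbdd : BddBelow ((fun t : ℝ =>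
        ((n : ℝ) * Real.sin t - Real.sin ((n : ℝ) * t)) /
          ((m : ℝ) * Real.sin t - Real.sin ((m : ℝ) * t))) '' Set.Ioo 0 π) :=
    ⟨Wsum a / Wsum b, hlb⟩
  apply le_antisymm
  · by_contra hcon
    push_neg at hcon
    have hlim := tendsto_ratio a b hb1
    have hev1 := hlim.eventually_lt_const hcon
    have hev2 : ∀ᶠ t in nhdsWithin 0 (Set.Ioi 0), t ∈ Set.Ioo (0:ℝ) π :=
      Filter.eventually_of_mem (Ioo_mem_nhdsGT Real.pi_pos)
        (fun x hx => hx)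
    obtain ⟨t, h1, h2⟩ := (hev1.and hev2).exists
    have hle : sInf ((fun t : ℝ =>
        ((n : ℝ) * Real.sin t - Real.sin ((n : ℝ) * t)) /
          ((m : ℝ) * Real.sin t - Real.sin ((m : ℝ) * t))) '' Set.Ioo 0 π)
        ≤ ((n : ℝ) * Real.sin t - Real.sin ((n : ℝ) * t)) /
          ((m : ℝ) * Real.sin t - Real.sin ((m : ℝ) * t)) :=
      csInf_le hbdd (Set.mem_image_of_mem _ h2)
    rw [hfeq t h2] at hle
    linarith
  · exact le_csInf hne hlb
end

section
/- Let n ≥ 2 be an integer. Then for every t ∈ (0, π), ((n+2)³ − (n+2))·(n·sin t − sin(n t)) ≥ (n³ − n)·((n+2)·sin t − sin((n+2) t)). Equivalently, A_n(t)/(n³ − n) ≥ A_{n+2}(t)/((n+2)³ − (n+2)) where A_k(t) = k − sin(k t)/sin t. -/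
open Real

/-- Generic monotonicity helper: if `f` has nonnegative derivative on `[a,b]`, then
`f a ≤ f b`. -/
lemma mono_aux {f f' : ℝ → ℝ} {a b : ℝ} (hab : a ≤ b)
    (hd : ∀ x, HasDerivAt f (f' x) x)
    (h0 : ∀ x ∈ Set.Icc a b, 0 ≤ f' x) : f a ≤ f b := by
  have hmono : MonotoneOn f (Set.Icc a b) := by
    apply monotoneOn_of_deriv_nonneg (convex_Icc a b)
    · exact fun x hx => (hd x).continuousAt.continuousWithinAt
    · exact fun x hx => (hd x).differentiableAt.differentiableWithinAt
    · intro x hx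
      rw [(hd x).deriv]
      exact h0 x (Set.Ioo_subset_Icc_self (by rwa [interior_Icc] at hx))
  exact hmono (Set.left_mem_Icc.2 hab) (Set.right_mem_Icc.2 hab) hab

/-- `s * cos s ≤ sin s` on `[0, π]`. -/
lemma mul_cos_le_sin {t : ℝ} (h0 : 0 ≤ t) (hπ : t ≤ π) : t * Real.cos t ≤ Real.sin t := by
  have hd : ∀ x : ℝ, HasDerivAt (fun s => Real.sin s - s * Real.cos s) (x * Real.sin x) x := by
    intro x
    have h1 : HasDerivAt (fun s : ℝ => s * Real.cos s)
        (1 * Real.cos x + x * (-Real.sin x)) x :=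
      (hasDerivAt_id x).mul (Real.hasDerivAt_cos x)
    have h2 := (Real.hasDerivAt_sin x).sub h1
    exact h2.congr_deriv (by ring)
  have hnn : ∀ x ∈ Set.Icc 0 t, 0 ≤ x * Real.sin x := by
    intro x hx
    exact mul_nonneg hx.1 (Real.sin_nonneg_of_nonneg_of_le_pi hx.1 (hx.2.trans hπ))
  have key := mono_aux (f := fun s => Real.sin s - s * Real.cos s)
    (f' := fun x => x * Real.sin x) h0 hd hnn
  simpa using key

/-- `0 ≤ cos t * sin (c t) - c * sin t * cos (c t)` for `c ≥ 1`, `0 ≤ t ≤ π`, `c t ≤ π`. -/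
lemma eta_nonneg {c : ℝ} (hc : 1 ≤ c) {t : ℝ} (h0 : 0 ≤ t) (ht : t ≤ π)
    (hct : c * t ≤ π) :
    0 ≤ Real.cos t * Real.sin (c * t) - c * Real.sin t * Real.cos (c * t) := by
  have hd : ∀ x : ℝ, HasDerivAt
      (fun s => Real.cos s * Real.sin (c * s) - c * (Real.sin s * Real.cos (c * s)))
      ((c ^ 2 - 1) * (Real.sin x * Real.sin (c * x))) x := by
    intro x
    have hlin : HasDerivAt (fun y : ℝ => c * y) c x := by
      simpa using (hasDerivAt_id x).const_mul c
    have hcs : HasDerivAt (fun s : ℝ => Real.sin (c * s)) (Real.cos (c * x) * c) x :=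
      (Real.hasDerivAt_sin (c * x)).comp x hlin
    have hcc : HasDerivAt (fun s : ℝ => Real.cos (c * s)) (-Real.sin (c * x) * c) x :=
      (Real.hasDerivAt_cos (c * x)).comp x hlin
    have h1 : HasDerivAt (fun s : ℝ => Real.cos s * Real.sin (c * s))
        (-Real.sin x * Real.sin (c * x) + Real.cos x * (Real.cos (c * x) * c)) x :=
      (Real.hasDerivAt_cos x).mul hcs
    have h2 : HasDerivAt (fun s : ℝ => Real.sin s * Real.cos (c * s))
        (Real.cos x * Real.cos (c * x) + Real.sin x * (-Real.sin (c * x) * c)) x :=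
      (Real.hasDerivAt_sin x).mul hcc
    have h3 := h1.sub (h2.const_mul c)
    exact h3.congr_deriv (by ring)
  have hnn : ∀ x ∈ Set.Icc 0 t, 0 ≤ (c ^ 2 - 1) * (Real.sin x * Real.sin (c * x)) := by
    intro x hx
    have hx1 : 0 ≤ Real.sin x :=
      Real.sin_nonneg_of_nonneg_of_le_pi hx.1 (hx.2.trans ht)
    have hcx0 : 0 ≤ c * x := mul_nonneg (by linarith) hx.1
    have hcxπ : c * x ≤ π := by
      calc c * x ≤ c * t := by
            apply mul_le_mul_of_nonneg_left hx.2 (by linarith)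
        _ ≤ π := hct
    have hx2 : 0 ≤ Real.sin (c * x) := Real.sin_nonneg_of_nonneg_of_le_pi hcx0 hcxπ
    have : 0 ≤ c ^ 2 - 1 := by nlinarith
    exact mul_nonneg this (mul_nonneg hx1 hx2)
  have key := mono_aux
    (f := fun s => Real.cos s * Real.sin (c * s) - c * (Real.sin s * Real.cos (c * s)))
    (f' := fun x => (c ^ 2 - 1) * (Real.sin x * Real.sin (c * x))) h0 hd hnn
  simp only [Real.sin_zero, Real.cos_zero, mul_zero, zero_mul, sub_zero, one_mul,
    Real.sin_zero] at key
  calc (0:ℝ) ≤ Real.cos t * Real.sin (c * t) - c * (Real.sin t * Real.cos (c * t)) := by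
        simpa using key
    _ = Real.cos t * Real.sin (c * t) - c * Real.sin t * Real.cos (c * t) := by ring

/-- Region 1: near `t = 0`, `P` is nonnegative by monotonicity. -/
lemma reg1 (n : ℕ) (hn : 2 ≤ n) {t : ℝ} (h0 : 0 ≤ t) (ht : ((n : ℝ) + 1) * t ≤ π) :
    0 ≤ 4 * (n : ℝ) * ((n : ℝ) + 2) * Real.sin t
      + (n : ℝ) * ((n : ℝ) - 1) * Real.sin (((n : ℝ) + 2) * t)
      - ((n : ℝ) + 2) * ((n : ℝ) + 3) * Real.sin ((n : ℝ) * t) := by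
  have hn2 : (2 : ℝ) ≤ (n : ℝ) := by exact_mod_cast hn
  have hM : (1 : ℝ) ≤ ((n : ℝ) + 1) / 2 := by linarith
  have htπ : t ≤ π := by nlinarith [Real.pi_pos]
  have hd : ∀ x : ℝ, HasDerivAt (fun s => 4 * (n : ℝ) * ((n : ℝ) + 2) * Real.sin s
      + (n : ℝ) * ((n : ℝ) - 1) * Real.sin (((n : ℝ) + 2) * s)
      - ((n : ℝ) + 2) * ((n : ℝ) + 3) * Real.sin ((n : ℝ) * s))
      (4 * (n : ℝ) * ((n : ℝ) + 2) * Real.cos x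
        + (n : ℝ) * ((n : ℝ) - 1) * (Real.cos (((n : ℝ) + 2) * x) * ((n : ℝ) + 2))
        - ((n : ℝ) + 2) * ((n : ℝ) + 3) * (Real.cos ((n : ℝ) * x) * (n : ℝ))) x := by
    intro x
    have hlin1 : HasDerivAt (fun y : ℝ => ((n : ℝ) + 2) * y) ((n : ℝ) + 2) x := by
      simpa using (hasDerivAt_id x).const_mul ((n : ℝ) + 2)
    have hlin2 : HasDerivAt (fun y : ℝ => (n : ℝ) * y) (n : ℝ) x := by
      simpa using (hasDerivAt_id x).const_mul (n : ℝ)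
    have d1 : HasDerivAt (fun s : ℝ => Real.sin (((n : ℝ) + 2) * s))
        (Real.cos (((n : ℝ) + 2) * x) * ((n : ℝ) + 2)) x :=
      (Real.hasDerivAt_sin (((n : ℝ) + 2) * x)).comp x hlin1
    have d2 : HasDerivAt (fun s : ℝ => Real.sin ((n : ℝ) * s))
        (Real.cos ((n : ℝ) * x) * (n : ℝ)) x :=
      (Real.hasDerivAt_sin ((n : ℝ) * x)).comp x hlin2
    exact (((Real.hasDerivAt_sin x).const_mul (4 * (n : ℝ) * ((n : ℝ) + 2))).add
      (d1.const_mul ((n : ℝ) * ((n : ℝ) - 1)))).sub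
      (d2.const_mul (((n : ℝ) + 2) * ((n : ℝ) + 3)))
  have hnn : ∀ x ∈ Set.Icc 0 t, 0 ≤ 4 * (n : ℝ) * ((n : ℝ) + 2) * Real.cos x
      + (n : ℝ) * ((n : ℝ) - 1) * (Real.cos (((n : ℝ) + 2) * x) * ((n : ℝ) + 2))
      - ((n : ℝ) + 2) * ((n : ℝ) + 3) * (Real.cos ((n : ℝ) * x) * (n : ℝ)) := by
    intro x hx
    -- the derivative equals 8 n (n+2) sin y * η where y = (n+1)x/2
    set y : ℝ := ((n : ℝ) + 1) / 2 * x with hy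
    have e1 : ((n : ℝ) + 2) * x = 2 * y + x := by rw [hy]; ring
    have e2 : (n : ℝ) * x = 2 * y - x := by rw [hy]; ring
    have hxπ : x ≤ π := le_trans hx.2 htπ
    have hyπ : ((n : ℝ) + 1) / 2 * x ≤ π := by
      have : ((n : ℝ) + 1) * x ≤ π := by
        calc ((n : ℝ) + 1) * x ≤ ((n : ℝ) + 1) * t :=
              mul_le_mul_of_nonneg_left hx.2 (by linarith)
          _ ≤ π := ht
      nlinarith [hx.1]
    have hηy := eta_nonneg hM hx.1 hxπ hyπ
    have hsy : 0 ≤ Real.sin y := by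
      rw [hy]
      exact Real.sin_nonneg_of_nonneg_of_le_pi
        (mul_nonneg (by linarith) hx.1) hyπ
    have hfactor : 0 ≤ Real.sin y *
        (Real.cos x * Real.sin (((n : ℝ) + 1) / 2 * x)
          - ((n : ℝ) + 1) / 2 * Real.sin x * Real.cos (((n : ℝ) + 1) / 2 * x)) :=
      mul_nonneg hsy hηy
    have hident : 4 * (n : ℝ) * ((n : ℝ) + 2) * Real.cos x
        + (n : ℝ) * ((n : ℝ) - 1) * (Real.cos (((n : ℝ) + 2) * x) * ((n : ℝ) + 2))
        - ((n : ℝ) + 2) * ((n : ℝ) + 3) * (Real.cos ((n : ℝ) * x) * (n : ℝ))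
        = 8 * (n : ℝ) * ((n : ℝ) + 2) * (Real.sin y *
        (Real.cos x * Real.sin (((n : ℝ) + 1) / 2 * x)
          - ((n : ℝ) + 1) / 2 * Real.sin x * Real.cos (((n : ℝ) + 1) / 2 * x))) := by
      rw [e1, e2, Real.cos_add, Real.cos_sub, Real.sin_two_mul, Real.cos_two_mul]
      have hyx : ((n : ℝ) + 1) / 2 * x = y := rfl
      rw [hyx]
      linear_combination (-(8 : ℝ) * (n : ℝ) * ((n : ℝ) + 2) * Real.cos x) *
        Real.sin_sq_add_cos_sq y
    rw [hident]
    have : (0 : ℝ) ≤ 8 * (n : ℝ) * ((n : ℝ) + 2) := by positivity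
    exact mul_nonneg this hfactor
  have key := mono_aux (f := fun s => 4 * (n : ℝ) * ((n : ℝ) + 2) * Real.sin s
      + (n : ℝ) * ((n : ℝ) - 1) * Real.sin (((n : ℝ) + 2) * s)
      - ((n : ℝ) + 2) * ((n : ℝ) + 3) * Real.sin ((n : ℝ) * s))
    (f' := fun x => 4 * (n : ℝ) * ((n : ℝ) + 2) * Real.cos x
      + (n : ℝ) * ((n : ℝ) - 1) * (Real.cos (((n : ℝ) + 2) * x) * ((n : ℝ) + 2))
      - ((n : ℝ) + 2) * ((n : ℝ) + 3) * (Real.cos ((n : ℝ) * x) * (n : ℝ))) h0 hd hnn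
  simpa using key

set_option maxHeartbeats 1000000 in
/-- Main positivity: `P n t ≥ 0` on `(0, π)`. -/
lemma Ppos (n : ℕ) (hn : 2 ≤ n) {t : ℝ} (ht0 : 0 < t) (htπ : t < π) :
    0 ≤ 4 * (n : ℝ) * ((n : ℝ) + 2) * Real.sin t
      + (n : ℝ) * ((n : ℝ) - 1) * Real.sin (((n : ℝ) + 2) * t)
      - ((n : ℝ) + 2) * ((n : ℝ) + 3) * Real.sin ((n : ℝ) * t) := by
  have hn2 : (2 : ℝ) ≤ (n : ℝ) := by exact_mod_cast hn
  have hsi : 0 < Real.sin t := Real.sin_pos_of_pos_of_lt_pi ht0 htπ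
  by_cases hA : 3 * Real.cos t ^ 2 ≤ ((n : ℝ) - 1) * ((n : ℝ) + 3) * Real.sin t ^ 2
  · -- Region 2 : quadratic form is PSD
    set x : ℝ := ((n : ℝ) + 1) / 2 * t with hx
    have e1 : ((n : ℝ) + 2) * t = 2 * x + t := by rw [hx]; ring
    have e2 : (n : ℝ) * t = 2 * x - t := by rw [hx]; ring
    have I1 : 4 * (n : ℝ) * ((n : ℝ) + 2) * Real.sin t
        + (n : ℝ) * ((n : ℝ) - 1) * Real.sin (((n : ℝ) + 2) * t)
        - ((n : ℝ) + 2) * ((n : ℝ) + 3) * Real.sin ((n : ℝ) * t)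
        = 2 * ((n : ℝ) - 1) * ((n : ℝ) + 3) * Real.sin t * Real.sin x ^ 2
          + 6 * ((n : ℝ) + 1) ^ 2 * Real.sin t * Real.cos x ^ 2
          - 12 * ((n : ℝ) + 1) * Real.cos t * Real.sin x * Real.cos x := by
      rw [e1, e2, Real.sin_add, Real.sin_sub, Real.sin_two_mul, Real.cos_two_mul]
      linear_combination (-(Real.sin t) * (2 * (n : ℝ) ^ 2 + 4 * (n : ℝ) - 6)) *
        Real.sin_sq_add_cos_sq x
    rw [I1]
    nlinarith [sq_nonneg (((n : ℝ) - 1) * ((n : ℝ) + 3) * Real.sin t * Real.sin x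
        - 3 * ((n : ℝ) + 1) * Real.cos t * Real.cos x),
      mul_nonneg (sub_nonneg.2 hA) (sq_nonneg (Real.cos x)),
      mul_pos (mul_pos (show (0:ℝ) < (n : ℝ) - 1 by linarith)
        (show (0:ℝ) < (n : ℝ) + 3 by linarith)) hsi, hsi.le, sq_nonneg (Real.sin x),
      sq_nonneg (Real.cos x)]
  · push_neg at hA
    have hK : (0:ℝ) ≤ ((n : ℝ) - 1) * ((n : ℝ) + 3) := by nlinarith
    have hco2 : 0 < Real.cos t ^ 2 := by
      nlinarith [mul_nonneg hK (sq_nonneg (Real.sin t))]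
    have hcone : Real.cos t ≠ 0 := by
      intro h; rw [h] at hco2; simp at hco2
    rcases lt_or_gt_of_ne hcone with hneg | hpos
    · -- Region 3 : near π
      obtain ⟨u, hu⟩ : ∃ u : ℝ, u = π - t := ⟨_, rfl⟩
      have hu0 : 0 < u := by rw [hu]; linarith
      have huπ : u < π := by rw [hu]; linarith
      have hsinu : Real.sin u = Real.sin t := by rw [hu, Real.sin_pi_sub]
      have hcosu : Real.cos u = -Real.cos t := by rw [hu, Real.cos_pi_sub]
      have hcosu_pos : 0 < Real.cos u := by rw [hcosu]; linarith
      -- u cos u ≤ sin u gives u² (n-1)(n+3) < 3, hence (n+1) u < 3 ≤ π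
      have htan := mul_cos_le_sin hu0.le huπ.le
      have hu2 : ((n : ℝ) - 1) * ((n : ℝ) + 3) * u ^ 2 < 3 := by
        have h1 : ((n : ℝ) - 1) * ((n : ℝ) + 3) * (u * Real.cos u) ^ 2
            ≤ ((n : ℝ) - 1) * ((n : ℝ) + 3) * Real.sin u ^ 2 := by
          apply mul_le_mul_of_nonneg_left _ hK
          have h0s : 0 ≤ Real.sin u := by rw [hsinu]; exact hsi.le
          nlinarith [mul_nonneg (mul_nonneg hu0.le hcosu_pos.le) h0s]
        have h2 : ((n : ℝ) - 1) * ((n : ℝ) + 3) * Real.sin u ^ 2 < 3 * Real.cos u ^ 2 := by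
          rw [hsinu]
          have : Real.cos u ^ 2 = Real.cos t ^ 2 := by rw [hcosu]; ring
          rw [this]; exact hA
        have h3 : ((n : ℝ) - 1) * ((n : ℝ) + 3) * u ^ 2 * Real.cos u ^ 2
            < 3 * Real.cos u ^ 2 := by nlinarith
        have hcu2 : 0 < Real.cos u ^ 2 := by positivity
        nlinarith
      have hnu3 : ((n : ℝ) + 1) * u < 3 := by
        have h9 : 5 * ((n : ℝ) + 1) ^ 2 ≤ 9 * (((n : ℝ) - 1) * ((n : ℝ) + 3)) := by
          nlinarith
        have h4 : (((n : ℝ) + 1) * u) ^ 2 < 27 / 5 := by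
          nlinarith [mul_le_mul_of_nonneg_right h9 (sq_nonneg u)]
        nlinarith [mul_nonneg (show (0:ℝ) ≤ (n : ℝ) + 1 by linarith) hu0.le,
          sq_nonneg (((n : ℝ) + 1) * u - 3)]
      have hnuπ : ((n : ℝ) + 1) * u ≤ π := le_of_lt (lt_trans hnu3 Real.pi_gt_three)
      -- rewrite arguments using t = π - u
      have ht_eq : t = π - u := by rw [hu]; ring
      have arg1 : ((n : ℝ) + 2) * t = ((n + 2 : ℕ) : ℝ) * π - ((n : ℝ) + 2) * u := by
        push_cast; rw [ht_eq]; ring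
      have arg2 : (n : ℝ) * t = ((n : ℕ) : ℝ) * π - (n : ℝ) * u := by
        rw [ht_eq]; ring
      have s1 : Real.sin (((n : ℝ) + 2) * t)
          = -((-1 : ℝ) ^ (n + 2) * Real.sin (((n : ℝ) + 2) * u)) := by
        rw [arg1, Real.sin_nat_mul_pi_sub]
      have s2 : Real.sin ((n : ℝ) * t) = -((-1 : ℝ) ^ n * Real.sin ((n : ℝ) * u)) := by
        rw [arg2, Real.sin_nat_mul_pi_sub]
      have s0 : Real.sin t = Real.sin u := hsinu.symm
      rcases Nat.even_or_odd n with he | ho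
      · -- n even : direct positivity
        have hp2 : ((-1 : ℝ) ^ (n + 2)) = 1 := (he.add (by norm_num)).neg_one_pow
        have hp0 : ((-1 : ℝ) ^ n) = 1 := he.neg_one_pow
        rw [s0, s1, s2, hp2, hp0]
        -- goal: 0 ≤ 4n(n+2) sin u - n(n-1) sin((n+2)u) + (n+2)(n+3) sin(nu)
        have e3 : ((n : ℝ) + 2) * u = ((n : ℝ) + 1) * u + u := by ring
        have e4 : (n : ℝ) * u = ((n : ℝ) + 1) * u - u := by ring
        rw [e3, e4, Real.sin_add, Real.sin_sub]
        have hsv : 0 ≤ Real.sin (((n : ℝ) + 1) * u) :=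
          Real.sin_nonneg_of_nonneg_of_le_pi
            (mul_nonneg (by linarith) hu0.le) hnuπ
        have hsu : 0 ≤ Real.sin u := by rw [hsinu]; exact hsi.le
        have hcv : Real.cos (((n : ℝ) + 1) * u) ≤ 1 := Real.cos_le_one _
        have k1 : 0 ≤ 6 * ((n : ℝ) + 1) * (Real.sin (((n : ℝ) + 1) * u) * Real.cos u) :=
          mul_nonneg (by positivity) (mul_nonneg hsv hcosu_pos.le)
        have k2 : 0 ≤ (2 * (n : ℝ) ^ 2 + 4 * n + 6) *
            (Real.sin u * (1 - Real.cos (((n : ℝ) + 1) * u))) :=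
          mul_nonneg (by positivity) (mul_nonneg hsu (sub_nonneg.2 hcv))
        have k3 : 0 ≤ (2 * (n : ℝ) ^ 2 + 4 * n - 6) * Real.sin u :=
          mul_nonneg (by nlinarith) hsu
        nlinarith [k1, k2, k3]
      · -- n odd : P(π - u) = P(u), use region 1 at u
        have hp2 : ((-1 : ℝ) ^ (n + 2)) = -1 := (ho.add_even (by norm_num)).neg_one_pow
        have hp0 : ((-1 : ℝ) ^ n) = -1 := ho.neg_one_pow
        rw [s0, s1, s2, hp2, hp0]
        have := reg1 n hn hu0.le hnuπ
        nlinarith [this]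
    · -- Region 1 : near 0
      have htan := mul_cos_le_sin ht0.le htπ.le
      have ht2 : ((n : ℝ) - 1) * ((n : ℝ) + 3) * t ^ 2 < 3 := by
        have h1 : ((n : ℝ) - 1) * ((n : ℝ) + 3) * (t * Real.cos t) ^ 2
            ≤ ((n : ℝ) - 1) * ((n : ℝ) + 3) * Real.sin t ^ 2 := by
          apply mul_le_mul_of_nonneg_left _ hK
          nlinarith [mul_nonneg (mul_nonneg ht0.le hpos.le) hsi.le]
        have h3 : ((n : ℝ) - 1) * ((n : ℝ) + 3) * t ^ 2 * Real.cos t ^ 2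
            < 3 * Real.cos t ^ 2 := by nlinarith
        nlinarith
      have hnt3 : ((n : ℝ) + 1) * t < 3 := by
        have h9 : 5 * ((n : ℝ) + 1) ^ 2 ≤ 9 * (((n : ℝ) - 1) * ((n : ℝ) + 3)) := by
          nlinarith
        have h4 : (((n : ℝ) + 1) * t) ^ 2 < 27 / 5 := by
          nlinarith [mul_le_mul_of_nonneg_right h9 (sq_nonneg t)]
        nlinarith [mul_nonneg (show (0:ℝ) ≤ (n : ℝ) + 1 by linarith) ht0.le,
          sq_nonneg (((n : ℝ) + 1) * t - 3)]
      exact reg1 n hn ht0.le (le_of_lt (lt_trans hnt3 Real.pi_gt_three))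

set_option maxHeartbeats 1000000 in
theorem stmt_7 (n : ℕ) (hn : 2 ≤ n) :
    ∀ t ∈ Set.Ioo (0 : ℝ) π,
      (((n : ℝ) + 2) ^ 3 - ((n : ℝ) + 2)) *
          ((n : ℝ) * Real.sin t - Real.sin ((n : ℝ) * t)) ≥
        ((n : ℝ) ^ 3 - n) *
          (((n : ℝ) + 2) * Real.sin t - Real.sin (((n : ℝ) + 2) * t)) ∧
      ((n : ℝ) - Real.sin ((n : ℝ) * t) / Real.sin t) / ((n : ℝ) ^ 3 - n) ≥
        (((n : ℝ) + 2) - Real.sin (((n : ℝ) + 2) * t) / Real.sin t) /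
          (((n : ℝ) + 2) ^ 3 - ((n : ℝ) + 2)) := by
  intro t ht
  obtain ⟨ht0, htπ⟩ := ht
  have hn2 : (2 : ℝ) ≤ (n : ℝ) := by exact_mod_cast hn
  have hsi : 0 < Real.sin t := Real.sin_pos_of_pos_of_lt_pi ht0 htπ
  have hP := Ppos n hn ht0 htπ
  have key : (((n : ℝ) + 2) ^ 3 - ((n : ℝ) + 2)) *
      ((n : ℝ) * Real.sin t - Real.sin ((n : ℝ) * t))
      - ((n : ℝ) ^ 3 - n) *
      (((n : ℝ) + 2) * Real.sin t - Real.sin (((n : ℝ) + 2) * t))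
      = ((n : ℝ) + 1) * (4 * (n : ℝ) * ((n : ℝ) + 2) * Real.sin t
        + (n : ℝ) * ((n : ℝ) - 1) * Real.sin (((n : ℝ) + 2) * t)
        - ((n : ℝ) + 2) * ((n : ℝ) + 3) * Real.sin ((n : ℝ) * t)) := by ring
  have h1 : (((n : ℝ) + 2) ^ 3 - ((n : ℝ) + 2)) *
      ((n : ℝ) * Real.sin t - Real.sin ((n : ℝ) * t)) ≥
      ((n : ℝ) ^ 3 - n) *
      (((n : ℝ) + 2) * Real.sin t - Real.sin (((n : ℝ) + 2) * t)) := by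
    nlinarith [key, hP]
  refine ⟨h1, ?_⟩
  have ha : (0 : ℝ) < (n : ℝ) ^ 3 - n := by
    nlinarith [mul_pos (mul_pos (show (0:ℝ) < (n : ℝ) - 1 by linarith)
      (show (0:ℝ) < (n : ℝ) by linarith)) (show (0:ℝ) < (n : ℝ) + 1 by linarith)]
  have hb : (0 : ℝ) < ((n : ℝ) + 2) ^ 3 - ((n : ℝ) + 2) := by
    nlinarith [mul_pos (mul_pos (show (0:ℝ) < (n : ℝ) + 1 by linarith)
      (show (0:ℝ) < (n : ℝ) + 2 by linarith)) (show (0:ℝ) < (n : ℝ) + 3 by linarith)]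
  rw [ge_iff_le, div_le_div_iff₀ hb ha]
  have ea : (n : ℝ) - Real.sin ((n : ℝ) * t) / Real.sin t
      = ((n : ℝ) * Real.sin t - Real.sin ((n : ℝ) * t)) / Real.sin t := by
    field_simp
  have eb : ((n : ℝ) + 2) - Real.sin (((n : ℝ) + 2) * t) / Real.sin t
      = (((n : ℝ) + 2) * Real.sin t - Real.sin (((n : ℝ) + 2) * t)) / Real.sin t := by
    field_simp
  rw [ea, eb, div_mul_eq_mul_div, div_mul_eq_mul_div, div_le_div_iff₀ hsi hsi]
  nlinarith [h1, hsi]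
end

section
/- Let n ≥ 2 be an integer and let z ∈ ℂ satisfy (n+1)·z^{2n−2} − 4(2n−1)·z^{n−1} + (2n−1)(3n−1) = 0. Then |z|^{2n−2} = (2n−1)(3n² + 2n − 1)/(n+1)², and in particular |z| > 1. -/
theorem stmt_9 (n : ℕ) (hn : 2 ≤ n) (z : ℂ)
    (hz : ((n : ℂ) + 1) * z ^ (2 * n - 2) - 4 * (2 * (n : ℂ) - 1) * z ^ (n - 1) +
        (2 * (n : ℂ) - 1) * (3 * (n : ℂ) - 1) = 0) :
    ‖z‖ ^ (2 * n - 2) =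
        (2 * (n : ℝ) - 1) * (3 * (n : ℝ) ^ 2 + 2 * n - 1) / ((n : ℝ) + 1) ^ 2 ∧
      1 < ‖z‖ := by
  have hN : (2:ℝ) ≤ (n:ℝ) := by exact_mod_cast hn
  set w : ℂ := z ^ (n - 1) with hw
  have h2 : 2 * n - 2 = (n - 1) * 2 := by omega
  have hw2 : z ^ (2 * n - 2) = w ^ 2 := by rw [h2, pow_mul]
  rw [hw2] at hz
  have h1 := congrArg Complex.re hz
  have h2' := congrArg Complex.im hz
  simp [Complex.mul_re, Complex.mul_im, pow_two] at h1 h2'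
  set N := (n:ℝ)
  -- w is not real
  have hb : w.im ≠ 0 := by
    intro b0
    rw [b0] at h1
    nlinarith [sq_nonneg ((N+1) * w.re - 2 * (2*N - 1)), sq_nonneg (N - 1)]
  -- real part determined
  have hre : (N + 1) * w.re = 2 * (2 * N - 1) := by
    have : w.im * ((N + 1) * 2 * w.re - 4 * (2 * N - 1)) = 0 := by ring_nf; linarith [h2']
    rcases mul_eq_zero.1 this with h | h
    · exact absurd h hb
    · linarith
  have hN1 : (N + 1) ≠ 0 := by positivity
  -- norm squared value
  have key : w.re ^ 2 + w.im ^ 2 = (2 * N - 1) * (3 * N ^ 2 + 2 * N - 1) / (N + 1) ^ 2 := by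
    field_simp
    nlinarith [h1, hre, sq_nonneg w.re]
  have habs : ‖z‖ ^ (2 * n - 2) = w.re ^ 2 + w.im ^ 2 := by
    rw [h2, pow_mul, ← norm_pow, ← hw, Complex.sq_norm, Complex.normSq_apply]
    ring
  have hgt : (1:ℝ) < (2 * N - 1) * (3 * N ^ 2 + 2 * N - 1) / (N + 1) ^ 2 := by
    rw [lt_div_iff₀ (by positivity)]
    nlinarith
  have heq : ‖z‖ ^ (2 * n - 2) =
      (2 * N - 1) * (3 * N ^ 2 + 2 * N - 1) / (N + 1) ^ 2 := by rw [habs, key]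
  refine ⟨heq, ?_⟩
  have h1lt : 1 < ‖z‖ ^ (2 * n - 2) := heq ▸ hgt
  by_contra hle
  push_neg at hle
  have := pow_le_one₀ (norm_nonneg z) hle (n := 2 * n - 2)
  linarith
end

section
/- Let n ≥ 2 be an integer and define f : ℂ → ℂ by f(z) = z − (4/(3n−1))·zⁿ + ((n+1)/((2n−1)(3n−1)))·z^{2n−1}. Then for every z ∈ ℂ with |z| = 1 one has f(z) ≠ 0 and Re( z·f′(z)/f(z) ) ≥ 0. -/
set_option maxHeartbeats 1000000

private lemma aux_re (A B C : ℝ) (w : ℂ) :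
    ((A:ℂ) - (B:ℂ)*w + (C:ℂ)*w^2).re = A - B*w.re + C*(w.re^2 - w.im^2) := by
  simp only [Complex.sub_re, Complex.add_re, Complex.mul_re, Complex.ofReal_re,
    Complex.ofReal_im, pow_two, Complex.mul_im]
  ring

private lemma aux_im (A B C : ℝ) (w : ℂ) :
    ((A:ℂ) - (B:ℂ)*w + (C:ℂ)*w^2).im = -(B*w.im) + C*(2*w.re*w.im) := by
  simp only [Complex.sub_im, Complex.add_im, Complex.mul_im, Complex.mul_re,
    Complex.ofReal_re, Complex.ofReal_im, pow_two]
  ring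

theorem stmt_10 (n : ℕ) (hn : 2 ≤ n) (f : ℂ → ℂ)
    (hf : ∀ z : ℂ, f z =
      z - (4 / (3 * (n : ℂ) - 1)) * z ^ n +
        (((n : ℂ) + 1) / ((2 * (n : ℂ) - 1) * (3 * (n : ℂ) - 1))) * z ^ (2 * n - 1)) :
    ∀ z : ℂ, ‖z‖ = 1 → f z ≠ 0 ∧ 0 ≤ (z * deriv f z / f z).re := by
  intro z hz
  have hz0 : z ≠ 0 := by
    intro h; rw [h] at hz; simp at hz
  set N : ℝ := (n : ℝ) with hNdef
  have hN : (2:ℝ) ≤ N := by rw [hNdef]; exact_mod_cast hn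
  have h2R : (2*N-1) ≠ 0 := by nlinarith
  have h3R : (3*N-1) ≠ 0 := by nlinarith
  have h2 : (2*(n:ℂ)-1) ≠ 0 := by
    intro h
    have h' := congrArg Complex.re h
    simp [Complex.sub_re, Complex.mul_re] at h'
    rw [hNdef] at hN
    nlinarith [hN, h']
  have h3 : (3*(n:ℂ)-1) ≠ 0 := by
    intro h
    have h' := congrArg Complex.re h
    simp [Complex.sub_re, Complex.mul_re] at h'
    rw [hNdef] at hN
    nlinarith [hN, h']
  set w : ℂ := z ^ (n-1) with hwdef
  set x : ℝ := w.re with hxdef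
  set y : ℝ := w.im with hydef
  have hxy : x^2 + y^2 = 1 := by
    have : ‖w‖ = 1 := by rw [hwdef, norm_pow, hz, one_pow]
    have h := Complex.sq_norm w
    rw [this] at h
    simp [Complex.normSq_apply, pow_two] at h ⊢
    linarith [h]
  have hx1 : x ≤ 1 := by nlinarith [sq_nonneg y]
  have hx2 : -1 ≤ x := by nlinarith [sq_nonneg y]
  -- powers of z
  have hzn : z ^ n = w * z := by
    rw [hwdef, ← pow_succ]
    congr 1; omega
  have hz2n : z ^ (2*n-1) = w^2 * z := by
    rw [hwdef, ← pow_mul, ← pow_succ]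
    congr 1; omega
  have hz2n2 : z ^ (2*n-1-1) = w^2 := by
    rw [hwdef, ← pow_mul]
    congr 1; omega
  -- derivative
  have hfg : f = fun z => z - (4 / (3 * (n : ℂ) - 1)) * z ^ n +
        (((n : ℂ) + 1) / ((2 * (n : ℂ) - 1) * (3 * (n : ℂ) - 1))) * z ^ (2 * n - 1) :=
    funext hf
  have hd : HasDerivAt f (1 - (4 / (3 * (n : ℂ) - 1)) * ((n:ℂ) * z ^ (n-1)) +
      (((n : ℂ) + 1) / ((2 * (n : ℂ) - 1) * (3 * (n : ℂ) - 1))) * ((2*n-1 : ℕ) * z ^ (2*n-1-1))) z := by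
    rw [hfg]
    exact ((hasDerivAt_id z).sub ((hasDerivAt_pow n z).const_mul _)).add
      ((hasDerivAt_pow (2*n-1) z).const_mul _)
  have hderiv : deriv f z = 1 - (4 / (3 * (n : ℂ) - 1)) * ((n:ℂ) * w) +
      (((n : ℂ) + 1) / ((2 * (n : ℂ) - 1) * (3 * (n : ℂ) - 1))) * ((2*(n:ℂ)-1) * w^2) := by
    rw [hd.deriv, hz2n2, hwdef]
    have : ((2*n-1 : ℕ) : ℂ) = 2*(n:ℂ)-1 := by
      push_cast [Nat.cast_sub (by omega : 1 ≤ 2*n)]; ring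
    rw [this]
  set c : ℂ := (2*(n:ℂ)-1)*(3*(n:ℂ)-1) with hcdef
  have hc : c ≠ 0 := mul_ne_zero h2 h3
  set Pq : ℂ := (2*(n:ℂ)-1)*(3*(n:ℂ)-1) - 4*(2*(n:ℂ)-1)*w + ((n:ℂ)+1)*w^2 with hPqdef
  set Qq : ℂ := (2*(n:ℂ)-1)*((3*(n:ℂ)-1) - 4*(n:ℂ)*w + ((n:ℂ)+1)*w^2) with hQqdef
  have hPq : c * f z = z * Pq := by
    rw [hf z, hzn, hz2n, hPqdef, hcdef]
    field_simp [show (n:ℂ)*3-1 ≠ 0 by rw [mul_comm]; exact h3]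
  have hQq : c * (z * deriv f z) = z * Qq := by
    rw [hderiv, hQqdef, hcdef]
    field_simp [show (n:ℂ)*3-1 ≠ 0 by rw [mul_comm]; exact h3]
  -- components of Pq and Qq
  have hPcast : Pq = (((2*N-1)*(3*N-1) : ℝ):ℂ) - ((4*(2*N-1) : ℝ):ℂ)*w + (((N+1) : ℝ):ℂ)*w^2 := by
    rw [hPqdef, hNdef]
    push_cast
    ring
  have hQcast : Qq = (((2*N-1)*(3*N-1) : ℝ):ℂ) - ((4*N*(2*N-1) : ℝ):ℂ)*w + (((N+1)*(2*N-1) : ℝ):ℂ)*w^2 := by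
    rw [hQqdef, hNdef]
    push_cast
    ring
  have hPre : Pq.re = (2*N-1)*(3*N-1) - 4*(2*N-1)*x + (N+1)*(x^2-y^2) := by
    rw [hPcast, aux_re, hxdef, hydef]
  have hPim : Pq.im = -(4*(2*N-1)*y) + (N+1)*(2*x*y) := by
    rw [hPcast, aux_im, hxdef, hydef]
  have hQre : Qq.re = (2*N-1)*(3*N-1) - 4*N*(2*N-1)*x + (N+1)*(2*N-1)*(x^2-y^2) := by
    rw [hQcast, aux_re, hxdef, hydef]
  have hQim : Qq.im = -(4*N*(2*N-1)*y) + (N+1)*(2*N-1)*(2*x*y) := by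
    rw [hQcast, aux_im, hxdef, hydef]
  have hnsq : 0 < Complex.normSq Pq := by
    rw [Complex.normSq_apply, hPre, hPim]
    have hdec : ((2*N-1)*(3*N-1) - 4*(2*N-1)*x + (N+1)*(x^2-y^2)) * ((2*N-1)*(3*N-1) - 4*(2*N-1)*x + (N+1)*(x^2-y^2))
        + (-(4*(2*N-1)*y) + (N+1)*(2*x*y)) * (-(4*(2*N-1)*y) + (N+1)*(2*x*y))
        = (9*N^4+12*N^3-2*N^2-4*N+1)*(1-x)^2 + (18*N^4-48*N^3+48*N^2-24*N+6)*((1-x)*(1+x))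
          + (9*N^4-36*N^3+54*N^2-36*N+9)*(1+x)^2 := by
      linear_combination ((N^2+2*N+1)*(x^2+y^2) + (-16*N^2-8*N+8)*x + (-12*N^3+63*N^2-54*N+15)) * hxy
    rw [hdec]
    have ha : (9:ℝ) ≤ 9*N^4+12*N^3-2*N^2-4*N+1 := by nlinarith
    have hb : (0:ℝ) ≤ 18*N^4-48*N^3+48*N^2-24*N+6 := by nlinarith
    have hg : (9:ℝ) ≤ 9*N^4-36*N^3+54*N^2-36*N+9 := by nlinarith
    nlinarith [mul_nonneg (by linarith : (0:ℝ) ≤ 9*N^4+12*N^3-2*N^2-4*N+1 - 9) (sq_nonneg (1-x)),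
      mul_nonneg (by linarith : (0:ℝ) ≤ 9*N^4-36*N^3+54*N^2-36*N+9 - 9) (sq_nonneg (1+x)),
      mul_nonneg hb (mul_nonneg (by linarith : (0:ℝ) ≤ 1-x) (by linarith : (0:ℝ) ≤ 1+x)),
      sq_nonneg x]
  have hPq0 : Pq ≠ 0 := fun h => by simp [h] at hnsq
  have hfz : f z ≠ 0 := by
    intro h
    rw [h, mul_zero] at hPq
    exact (mul_ne_zero hz0 hPq0) hPq.symm
  refine ⟨hfz, ?_⟩
  have hmain : z * deriv f z / f z = Qq / Pq := by
    rw [← mul_div_mul_left (z * deriv f z) (f z) hc, hPq, hQq,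
      mul_div_mul_left _ _ hz0]
  rw [hmain, Complex.div_re, ← add_div]
  apply div_nonneg _ (Complex.normSq_nonneg Pq)
  rw [hPre, hPim, hQre, hQim]
  have key : ((2*N-1)*(3*N-1) - 4*N*(2*N-1)*x + (N+1)*(2*N-1)*(x^2-y^2)) * ((2*N-1)*(3*N-1) - 4*(2*N-1)*x + (N+1)*(x^2-y^2))
      + (-(4*N*(2*N-1)*y) + (N+1)*(2*N-1)*(2*x*y)) * (-(4*(2*N-1)*y) + (N+1)*(2*x*y))
      = 4*N*(2*N-1)*(3*N-1)*(N+1)*(1-x)^2 := by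
    linear_combination ((2*N^3+3*N^2-1)*x^2 + (2*N^3+3*N^2-1)*y^2 + (-24*N^3-4*N^2+16*N-4)*x
      + (-12*N^4+64*N^3-53*N^2+14*N-1)) * hxy
  rw [key]
  have h0 : (0:ℝ) ≤ 4*N*(2*N-1)*(3*N-1)*(N+1) := by
    have := mul_pos (mul_pos (mul_pos (by linarith : (0:ℝ) < 4*N)
      (by linarith : (0:ℝ) < 2*N-1)) (by linarith : (0:ℝ) < 3*N-1))
      (by linarith : (0:ℝ) < N+1)
    linarith
  nlinarith [mul_nonneg h0 (sq_nonneg (1-x))]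
end

section
/- For every real w > 0, −w²·∫₀¹ (1−u)²/(1+4uw) du − 2w³·∫₀¹ ∫₀ᵘ (3 + 1/(1+4vw))·(1−u)(1−v)/(√(1+4uw)·√(1+4vw)) dv du = (1+4w)·(√(1+4w) − 1 − 2w)/6. -/
lemma hasDerivAt_sqrtlin (w t : ℝ) (h : 0 < 1 + 4*t*w) :
    HasDerivAt (fun t : ℝ => Real.sqrt (1+4*t*w)) (2*w / Real.sqrt (1+4*t*w)) t := by
  have h1 : HasDerivAt (fun t : ℝ => 1+4*t*w) (4*w) t := by
    simpa using (((hasDerivAt_id t).const_mul 4).mul_const w).const_add 1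
  have hs : Real.sqrt (1+4*t*w) ≠ 0 := (Real.sqrt_pos.mpr h).ne'
  have := h1.sqrt h.ne'
  convert this using 1
  field_simp
  ring

noncomputable def AF (w v : ℝ) : ℝ :=
  ((3*(1+4*w) - 1 - (1+4*v*w)) * Real.sqrt (1+4*v*w)
    - (1+4*w) * (Real.sqrt (1+4*v*w))⁻¹) / (8*w^2)

lemma AF_deriv (w : ℝ) (hw : 0 < w) (v : ℝ) (hv : 0 ≤ v) :
    HasDerivAt (AF w) ((3 + 1/(1+4*v*w)) * (1-v) / Real.sqrt (1+4*v*w)) v := by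
  have hV : (0:ℝ) < 1 + 4*v*w := by nlinarith
  set s := Real.sqrt (1+4*v*w) with hs_def
  have hs : 0 < s := Real.sqrt_pos.mpr hV
  have hs2 : s^2 = 1 + 4*v*w := Real.sq_sqrt hV.le
  have h1 : HasDerivAt (fun v : ℝ => 3*(1+4*w) - 1 - (1+4*v*w)) (-(4*w)) v := by
    simpa using ((((hasDerivAt_id v).const_mul 4).mul_const w).const_add 1).const_sub (3*(1+4*w)-1)
  have hS : HasDerivAt (fun v : ℝ => Real.sqrt (1+4*v*w)) (2*w / s) v :=
    hasDerivAt_sqrtlin w v hV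
  have hInv : HasDerivAt (fun v : ℝ => (1+4*w) * (Real.sqrt (1+4*v*w))⁻¹)
      ((1+4*w) * (-(2*w/s) / s^2)) v := (hS.inv hs.ne').const_mul _
  have hmain : HasDerivAt (AF w)
      (((-(4*w)) * s + (3*(1+4*w) - 1 - (1+4*v*w)) * (2*w/s)
        - (1+4*w) * (-(2*w/s) / s^2)) / (8*w^2)) v :=
    ((h1.mul hS).sub hInv).div_const _
  convert hmain using 1
  -- eliminate v: v = (s^2-1)/(4w)
  have hveq : v = (s^2 - 1)/(4*w) := by field_simp; linarith [hs2]
  clear_value s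
  rw [hveq]
  rw [show 1 + 4*((s^2 - 1)/(4*w))*w = s^2 by field_simp; ring]
  field_simp
  ring

lemma AF_zero (w : ℝ) (hw : 0 < w) : AF w 0 = 1/w := by
  have : (1:ℝ) + 4*0*w = 1 := by ring
  rw [AF, this, Real.sqrt_one]
  field_simp
  ring

lemma inner_eval (w : ℝ) (hw : 0 < w) (u : ℝ) (hu : 0 ≤ u) :
    (∫ v in (0:ℝ)..u, (3 + 1/(1+4*v*w)) * ((1-u)*(1-v)) /
        (Real.sqrt (1+4*u*w) * Real.sqrt (1+4*v*w)))
      = (1-u)/Real.sqrt (1+4*u*w) * (AF w u - AF w 0) := by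
  have hU : (0:ℝ) < 1 + 4*u*w := by nlinarith
  have hsu : (0:ℝ) < Real.sqrt (1+4*u*w) := Real.sqrt_pos.mpr hU
  have hmem : ∀ v ∈ Set.uIcc (0:ℝ) u, 0 ≤ v := by
    rw [Set.uIcc_of_le hu]; exact fun v hv => hv.1
  have hderiv : ∀ v ∈ Set.uIcc (0:ℝ) u,
      HasDerivAt (fun v => (1-u)/Real.sqrt (1+4*u*w) * AF w v)
        ((3 + 1/(1+4*v*w)) * ((1-u)*(1-v)) /
          (Real.sqrt (1+4*u*w) * Real.sqrt (1+4*v*w))) v := by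
    intro v hv
    have h0v : 0 ≤ v := hmem v hv
    have hV : (0:ℝ) < 1 + 4*v*w := by nlinarith
    have hsv : (0:ℝ) < Real.sqrt (1+4*v*w) := Real.sqrt_pos.mpr hV
    have := (AF_deriv w hw v h0v).const_mul ((1-u)/Real.sqrt (1+4*u*w))
    refine this.congr_deriv ?_
    ring
  have hint : IntervalIntegrable (fun v => (3 + 1/(1+4*v*w)) * ((1-u)*(1-v)) /
      (Real.sqrt (1+4*u*w) * Real.sqrt (1+4*v*w))) MeasureTheory.volume 0 u := by
    apply ContinuousOn.intervalIntegrable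
    apply ContinuousOn.div
    · apply ContinuousOn.mul
      · apply ContinuousOn.add continuousOn_const
        apply ContinuousOn.div continuousOn_const
        · exact (by continuity : Continuous fun v:ℝ => 1+4*v*w).continuousOn
        · intro v hv
          have h0v : 0 ≤ v := hmem v hv
          nlinarith
      · exact (by continuity : Continuous fun v:ℝ => (1-u)*(1-v)).continuousOn
    · exact (continuous_const.mul (Real.continuous_sqrt.comp
        (by continuity : Continuous fun v:ℝ => 1+4*v*w))).continuousOn
    · intro v hv
      have h0v : 0 ≤ v := hmem v hv
      have hV : (0:ℝ) < 1 + 4*v*w := by nlinarith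
      have hsv : (0:ℝ) < Real.sqrt (1+4*v*w) := Real.sqrt_pos.mpr hV
      positivity
  have := intervalIntegral.integral_eq_sub_of_hasDerivAt hderiv hint
  rw [this]; ring

noncomputable def AG1 (w u : ℝ) : ℝ :=
  ((1+4*w)^2 * Real.log (1+4*u*w) - 2*(1+4*w)*(1+4*u*w) + (1+4*u*w)^2/2) / (64*w^3)

lemma AG1_deriv (w : ℝ) (hw : 0 < w) (u : ℝ) (hu : 0 ≤ u) :
    HasDerivAt (AG1 w) ((1-u)^2/(1+4*u*w)) u := by
  have hU : (0:ℝ) < 1 + 4*u*w := by nlinarith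
  have h1 : HasDerivAt (fun u : ℝ => 1+4*u*w) (4*w) u := by
    simpa using (((hasDerivAt_id u).const_mul 4).mul_const w).const_add 1
  have hlog : HasDerivAt (fun u : ℝ => Real.log (1+4*u*w)) (4*w/(1+4*u*w)) u :=
    h1.log hU.ne'
  have hmain : HasDerivAt (AG1 w)
      (((1+4*w)^2 * (4*w/(1+4*u*w)) - 2*(1+4*w)*(4*w) + ((2:ℕ) * (1+4*u*w)^(2-1) * (4*w))/2) / (64*w^3)) u := by
    exact (((hlog.const_mul ((1+4*w)^2)).sub (h1.const_mul (2*(1+4*w)))).add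
      ((h1.pow 2).div_const 2)).div_const (64*w^3)
  convert hmain using 1
  field_simp
  ring

noncomputable def AG2 (w u : ℝ) : ℝ :=
  ((1+4*u*w)^3/3 - (4*(1+4*w)-1)*(1+4*u*w)^2/2 + 3*(1+4*w)^2*(1+4*u*w)
      - (1+4*w)^2 * Real.log (1+4*u*w)) / (128*w^4)
    - (2*(1+4*w)*Real.sqrt (1+4*u*w) - (2/3)*((1+4*u*w)*Real.sqrt (1+4*u*w))) / (16*w^3)

lemma AG2_deriv (w : ℝ) (hw : 0 < w) (u : ℝ) (hu : 0 ≤ u) :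
    HasDerivAt (AG2 w) ((1-u)/Real.sqrt (1+4*u*w) * (AF w u - AF w 0)) u := by
  have hU : (0:ℝ) < 1 + 4*u*w := by nlinarith
  set s := Real.sqrt (1+4*u*w) with hs_def
  have hs : 0 < s := Real.sqrt_pos.mpr hU
  have hs2 : s^2 = 1 + 4*u*w := Real.sq_sqrt hU.le
  have h1 : HasDerivAt (fun u : ℝ => 1+4*u*w) (4*w) u := by
    simpa using (((hasDerivAt_id u).const_mul 4).mul_const w).const_add 1
  have hlog : HasDerivAt (fun u : ℝ => Real.log (1+4*u*w)) (4*w/(1+4*u*w)) u :=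
    h1.log hU.ne'
  have hS : HasDerivAt (fun u : ℝ => Real.sqrt (1+4*u*w)) (2*w/s) u :=
    hasDerivAt_sqrtlin w u hU
  have hmain : HasDerivAt (AG2 w)
      ((((3:ℕ) * (1+4*u*w)^(3-1) * (4*w))/3 - ((4*(1+4*w)-1)) * ((2:ℕ) * (1+4*u*w)^(2-1) * (4*w))/2
          + 3*(1+4*w)^2 * (4*w) - (1+4*w)^2 * (4*w/(1+4*u*w))) / (128*w^4)
        - (2*(1+4*w) * (2*w/s) - (2/3) * ((4*w) * s + (1+4*u*w) * (2*w/s))) / (16*w^3)) u := by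
    have p1 := (h1.pow 3).div_const 3
    have p2a := (h1.pow 2).const_mul ((4*(1+4*w)-1))
    have p2 := p2a.div_const 2
    have p3 := h1.const_mul (3*(1+4*w)^2)
    have p4 := hlog.const_mul ((1+4*w)^2)
    have q1 := hS.const_mul (2*(1+4*w))
    have q2 := (h1.mul hS).const_mul (2/3:ℝ)
    exact ((((p1.sub p2).add p3).sub p4).div_const (128*w^4)).sub ((q1.sub q2).div_const (16*w^3))
  rw [AF_zero w hw]
  convert hmain using 1
  rw [AF]
  have hveq : u = (s^2 - 1)/(4*w) := by field_simp; linarith [hs2]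
  clear_value s
  rw [hveq]
  rw [show 1 + 4*((s^2 - 1)/(4*w))*w = s^2 by field_simp; ring]
  rw [Real.sqrt_sq hs.le]
  field_simp
  ring

lemma outer1 (w : ℝ) (hw : 0 < w) :
    (∫ u in (0:ℝ)..1, (1-u)^2/(1+4*u*w)) = AG1 w 1 - AG1 w 0 := by
  apply intervalIntegral.integral_eq_sub_of_hasDerivAt
  · intro u hu
    rw [Set.uIcc_of_le (by norm_num : (0:ℝ) ≤ 1)] at hu
    exact AG1_deriv w hw u hu.1
  · apply ContinuousOn.intervalIntegrable
    apply ContinuousOn.div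
    · exact (by continuity : Continuous fun u:ℝ => (1-u)^2).continuousOn
    · exact (by continuity : Continuous fun u:ℝ => 1+4*u*w).continuousOn
    · intro u hu
      rw [Set.uIcc_of_le (by norm_num : (0:ℝ) ≤ 1)] at hu
      nlinarith [hu.1]

lemma outer2 (w : ℝ) (hw : 0 < w) :
    (∫ u in (0:ℝ)..1, (1-u)/Real.sqrt (1+4*u*w) * (AF w u - AF w 0))
      = AG2 w 1 - AG2 w 0 := by
  apply intervalIntegral.integral_eq_sub_of_hasDerivAt
  · intro u hu
    rw [Set.uIcc_of_le (by norm_num : (0:ℝ) ≤ 1)] at hu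
    exact AG2_deriv w hw u hu.1
  · apply ContinuousOn.intervalIntegrable
    have hne : ∀ u ∈ Set.uIcc (0:ℝ) 1, Real.sqrt (1+4*u*w) ≠ 0 := by
      intro u hu
      rw [Set.uIcc_of_le (by norm_num : (0:ℝ) ≤ 1)] at hu
      have : (0:ℝ) < 1 + 4*u*w := by nlinarith [hu.1]
      exact (Real.sqrt_pos.mpr this).ne'
    have hcsq : ContinuousOn (fun u : ℝ => Real.sqrt (1+4*u*w)) (Set.uIcc (0:ℝ) 1) :=
      (Real.continuous_sqrt.comp (by continuity : Continuous fun u:ℝ => 1+4*u*w)).continuousOn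
    apply ContinuousOn.mul
    · exact ContinuousOn.div (by continuity : Continuous fun u:ℝ => 1-u).continuousOn hcsq hne
    · apply ContinuousOn.sub _ continuousOn_const
      unfold AF
      exact ((((by continuity : Continuous fun u:ℝ => 3*(1+4*w) - 1 - (1+4*u*w)).continuousOn.mul
          hcsq).sub (continuousOn_const.mul (hcsq.inv₀ hne))).div_const _)

theorem stmt_15 (w : ℝ) (hw : 0 < w) :
    -w ^ 2 * (∫ u in (0 : ℝ)..1, (1 - u) ^ 2 / (1 + 4 * u * w)) -
        2 * w ^ 3 * (∫ u in (0 : ℝ)..1, ∫ v in (0 : ℝ)..u,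
          (3 + 1 / (1 + 4 * v * w)) * ((1 - u) * (1 - v)) /
            (Real.sqrt (1 + 4 * u * w) * Real.sqrt (1 + 4 * v * w))) =
      (1 + 4 * w) * (Real.sqrt (1 + 4 * w) - 1 - 2 * w) / 6 := by
  have hcong : (∫ u in (0 : ℝ)..1, ∫ v in (0 : ℝ)..u,
      (3 + 1 / (1 + 4 * v * w)) * ((1 - u) * (1 - v)) /
        (Real.sqrt (1 + 4 * u * w) * Real.sqrt (1 + 4 * v * w)))
      = ∫ u in (0:ℝ)..1, (1-u)/Real.sqrt (1+4*u*w) * (AF w u - AF w 0) := by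
    apply intervalIntegral.integral_congr
    intro u hu
    rw [Set.uIcc_of_le (by norm_num : (0:ℝ) ≤ 1)] at hu
    exact inner_eval w hw u hu.1
  rw [hcong, outer1 w hw, outer2 w hw]
  simp only [AG1, AG2]
  rw [show (1:ℝ)+4*1*w = 1+4*w by ring, show (1:ℝ)+4*0*w = 1 by ring,
    Real.sqrt_one, Real.log_one]
  generalize Real.log (1+4*w) = L
  have h14 : (0:ℝ) < 1+4*w := by nlinarith
  set sa := Real.sqrt (1+4*w) with hsa_def
  have hsa : 0 < sa := Real.sqrt_pos.mpr h14
  have hsa2 : sa^2 = 1+4*w := Real.sq_sqrt h14.le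
  have h1ne : sa^2 - 1 ≠ 0 := by nlinarith
  have hweq : w = (sa^2-1)/4 := by linarith
  clear_value sa
  rw [hweq]
  field_simp
  ring
end

section
/- Let m ≥ 2 be an even integer and n ≥ 3 an odd integer. Then the infimum of the set of values (n·sin t − sin(n t))/(m·sin t − sin(m t)) as t ranges over the open interval (0, π) equals 0. -/
open Real

lemma abs_sin_nat_mul_le' (k : ℕ) (x : ℝ) : |Real.sin ((k : ℝ) * x)| ≤ k * |Real.sin x| := by
  induction k with
  | zero => simp
  | succ k ih =>
      have : ((k : ℝ) + 1) * x = (k : ℝ) * x + x := by ring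
      push_cast
      rw [this, Real.sin_add]
      calc |Real.sin ((k:ℝ)*x) * Real.cos x + Real.cos ((k:ℝ)*x) * Real.sin x|
          ≤ |Real.sin ((k:ℝ)*x) * Real.cos x| + |Real.cos ((k:ℝ)*x) * Real.sin x| := abs_add_le _ _
        _ ≤ |Real.sin ((k:ℝ)*x)| * 1 + 1 * |Real.sin x| := by
            rw [abs_mul, abs_mul]
            have c1 := Real.abs_cos_le_one x
            have c2 := Real.abs_cos_le_one ((k:ℝ)*x)
            nlinarith [abs_nonneg (Real.sin ((k:ℝ)*x)), abs_nonneg (Real.sin x)]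
        _ ≤ (k : ℝ) * |Real.sin x| + 1 * |Real.sin x| := by
            have := abs_nonneg (Real.sin x)
            nlinarith [ih]
        _ = ((k : ℝ) + 1) * |Real.sin x| := by ring

lemma elem_nonneg (k : ℕ) {t : ℝ} (ht : t ∈ Set.Ioo 0 π) :
    0 ≤ (k : ℝ) * Real.sin t - Real.sin ((k : ℝ) * t) := by
  have hs : 0 ≤ Real.sin t := Real.sin_nonneg_of_nonneg_of_le_pi ht.1.le ht.2.le
  have h := abs_sin_nat_mul_le' k t
  rw [abs_of_nonneg hs] at h
  have := le_abs_self (Real.sin ((k : ℝ) * t))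
  linarith

set_option maxHeartbeats 2000000 in
theorem stmt_17 (m n : ℕ) (hm : 2 ≤ m) (hme : Even m) (hn : 3 ≤ n) (hno : Odd n) :
    sInf ((fun t : ℝ =>
        ((n : ℝ) * Real.sin t - Real.sin ((n : ℝ) * t)) /
          ((m : ℝ) * Real.sin t - Real.sin ((m : ℝ) * t))) '' Set.Ioo 0 π) = 0 := by
  set f : ℝ → ℝ := fun t : ℝ =>
      ((n : ℝ) * Real.sin t - Real.sin ((n : ℝ) * t)) /
        ((m : ℝ) * Real.sin t - Real.sin ((m : ℝ) * t)) with hf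
  have hpi := Real.pi_pos
  have hlb : ∀ x ∈ f '' Set.Ioo 0 π, (0:ℝ) ≤ x := by
    rintro x ⟨t, ht, rfl⟩
    exact div_nonneg (elem_nonneg n ht) (elem_nonneg m ht)
  have hne : (f '' Set.Ioo 0 π).Nonempty :=
    ⟨f (π/2), ⟨π/2, ⟨by linarith, by linarith⟩, rfl⟩⟩
  have hbdd : BddBelow (f '' Set.Ioo 0 π) := ⟨0, hlb⟩
  refine le_antisymm ?_ (le_csInf hne hlb)
  -- upper bound: for every ε > 0 find a small value
  refine le_of_forall_pos_le_add ?_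
  intro ε hε
  rw [zero_add]
  -- choose s
  have hn0 : (0:ℝ) < n := by positivity
  have hm0 : (0:ℝ) < m := by positivity
  have hn3 : (3:ℝ) ≤ n := by exact_mod_cast hn
  have hm2 : (2:ℝ) ≤ m := by exact_mod_cast hm
  set s : ℝ := min (min (n:ℝ)⁻¹ (m:ℝ)⁻¹) (Real.sqrt ε / (n:ℝ)^2) with hs
  have hs0 : 0 < s := by
    apply lt_min (lt_min (by positivity) (by positivity))
    positivity
  have hsn : (n:ℝ) * s ≤ 1 := by
    have : s ≤ (n:ℝ)⁻¹ := le_trans (min_le_left _ _) (min_le_left _ _)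
    calc (n:ℝ) * s ≤ (n:ℝ) * (n:ℝ)⁻¹ := by gcongr
      _ = 1 := mul_inv_cancel₀ hn0.ne'
  have hsm : (m:ℝ) * s ≤ 1 := by
    have : s ≤ (m:ℝ)⁻¹ := le_trans (min_le_left _ _) (min_le_right _ _)
    calc (m:ℝ) * s ≤ (m:ℝ) * (m:ℝ)⁻¹ := by gcongr
      _ = 1 := mul_inv_cancel₀ hm0.ne'
  have hs1 : s ≤ 1 := by nlinarith
  have hslt : s < π := lt_of_le_of_lt hs1 (by linarith [Real.pi_gt_three])
  clear_value s
  set t : ℝ := π - s with htdef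
  have htmem : t ∈ Set.Ioo 0 π := ⟨by rw [htdef]; linarith, by rw [htdef]; linarith⟩
  clear_value t
  refine csInf_le_of_le hbdd ⟨t, htmem, rfl⟩ ?_
  -- rewrite sin values
  have hsint : Real.sin t = Real.sin s := by
    rw [htdef, Real.sin_pi_sub]
  have hnt : Real.sin ((n:ℝ) * t) = Real.sin ((n:ℝ) * s) := by
    have : (n:ℝ) * t = (n:ℝ) * π - (n:ℝ) * s := by rw [htdef]; ring
    rw [this, Real.sin_nat_mul_pi_sub, hno.neg_one_pow]
    ring
  have hmt : Real.sin ((m:ℝ) * t) = -Real.sin ((m:ℝ) * s) := by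
    have : (m:ℝ) * t = (m:ℝ) * π - (m:ℝ) * s := by rw [htdef]; ring
    rw [this, Real.sin_nat_mul_pi_sub, hme.neg_one_pow]
    ring
  have hnum : (n:ℝ) * Real.sin t - Real.sin ((n:ℝ) * t) ≤ (n:ℝ)^3 * s^3 / 4 := by
    rw [hsint, hnt]
    have h1 : Real.sin s ≤ s := Real.sin_le hs0.le
    have h2 : (n:ℝ)*s - ((n:ℝ)*s)^3/4 < Real.sin ((n:ℝ)*s) :=
      lt_of_le_of_lt (by have : 0 ≤ ((n:ℝ)*s)^3 := by positivity
                         linarith) (Real.sin_gt_sub_cube (mul_pos hn0 hs0))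
    nlinarith [hn0]
  have hden : s ≤ (m:ℝ) * Real.sin t - Real.sin ((m:ℝ) * t) := by
    rw [hsint, hmt]
    have h1 : s - s^3/4 < Real.sin s :=
      lt_of_le_of_lt (by have : 0 ≤ s^3 := by positivity
                         linarith) (Real.sin_gt_sub_cube hs0)
    have h2 : 0 ≤ Real.sin ((m:ℝ)*s) := by
      apply Real.sin_nonneg_of_nonneg_of_le_pi (by positivity)
      linarith [Real.pi_gt_three]
    have hs2 : s^2 ≤ s := by nlinarith
    have hs3 : s^3 ≤ s := by nlinarith
    have hsins : 0 < Real.sin s := by nlinarith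
    have h3 : (2:ℝ) * Real.sin s ≤ (m:ℝ) * Real.sin s := by gcongr
    nlinarith
  have hnum0 : 0 ≤ (n:ℝ) * Real.sin t - Real.sin ((n:ℝ) * t) := elem_nonneg n htmem
  have hfle : f t ≤ (n:ℝ)^3 * s^3 / 4 / s := by
    rw [hf]
    exact div_le_div₀ (by positivity) hnum hs0 hden
  have hseq : (n:ℝ)^3 * s^3 / 4 / s = (n:ℝ)^3 * s^2 / 4 := by
    rw [show (n:ℝ)^3*s^3 = ((n:ℝ)^3*s^2)*s by ring, div_div, mul_comm (4:ℝ) s, ← div_div,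
      mul_div_cancel_right₀ _ hs0.ne']
  have hsq : s^2 ≤ ε / (n:ℝ)^4 := by
    have h1 : s ≤ Real.sqrt ε / (n:ℝ)^2 := by rw [hs]; exact min_le_right _ _
    have h2 : s^2 ≤ (Real.sqrt ε / (n:ℝ)^2)^2 := pow_le_pow_left₀ hs0.le h1 2
    have h3 : (Real.sqrt ε / (n:ℝ)^2)^2 = ε / (n:ℝ)^4 := by
      rw [div_pow, Real.sq_sqrt hε.le, ← pow_mul]
    rw [h3] at h2; exact h2
  have h4 : (n:ℝ)^3 * s^2 ≤ ε / n := by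
    rw [le_div_iff₀ hn0]
    rw [le_div_iff₀ (by positivity : (0:ℝ) < (n:ℝ)^4)] at hsq
    have heq : (n:ℝ)^3*s^2*(n:ℝ) = s^2*(n:ℝ)^4 := by ring
    linarith
  have h5 : ε / (n:ℝ) ≤ ε := div_le_self hε.le (by linarith)
  have hfle2 : f t ≤ (n:ℝ)^3 * s^2 / 4 := by rw [hseq] at hfle; exact hfle
  linarith
end
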